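/- Let φ: (M,g) → (N,h) be a smooth map between Riemannian manifolds with tension field τ(φ) and biharmonic stress-energy tensor S₂ defined by S₂(X,Y) = ½|τ(φ)|² g(X,Y) + ⟨dφ, ∇τ(φ)⟩ g(X,Y) − ⟨dφ(X), ∇_Y τ(φ)⟩ − ⟨dφ(Y), ∇_X τ(φ)⟩. Then for every vector field Y on M, (div S₂)(Y) = −⟨τ₂(φ), dφ(Y)⟩, where τ₂(φ) = −Δτ(φ) − trace Rᴺ(dφ, τ(φ))dφ is the bitension field. -/
import Mathlib


open scoped RealInnerProductSpace
noncomputable section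

/-- A fixed orthonormal frame of the (model) tangent space of the `m`-dimensional
Riemannian manifold `M`. -/
def onb (m : ℕ) : OrthonormalBasis (Fin m) ℝ (EuclideanSpace ℝ (Fin m)) :=
  EuclideanSpace.basisFun (Fin m) ℝ

/-- The biharmonic stress-energy tensor
`S₂(X,Y) = ½|τ(φ)|² ⟨X,Y⟩ + ⟨dφ,∇τ(φ)⟩ ⟨X,Y⟩ − ⟨dφ(X),∇_Y τ(φ)⟩ − ⟨dφ(Y),∇_X τ(φ)⟩`,
expressed pointwise in terms of the differential `dphi` of `φ`, the tension field `tau`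
and its covariant derivative `Dtau` (the trace `⟨dφ,∇τ(φ)⟩` being computed in an
orthonormal frame). -/
def S2 {m : ℕ} {F : Type*} [NormedAddCommGroup F] [InnerProductSpace ℝ F]
    (dphi : EuclideanSpace ℝ (Fin m) →ₗ[ℝ] F) (tau : F)
    (Dtau : EuclideanSpace ℝ (Fin m) →ₗ[ℝ] F)
    (X Y : EuclideanSpace ℝ (Fin m)) : ℝ :=
  (1 / 2 : ℝ) * ‖tau‖ ^ 2 * ⟪X, Y⟫
    + (∑ i, ⟪dphi (onb m i), Dtau (onb m i)⟫) * ⟪X, Y⟫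
    - ⟪dphi X, Dtau Y⟫ - ⟪dphi Y, Dtau X⟫

/-- Jiang. For any map `φ : (M,g) → (N,h)`, the stress-energy tensor `S₂`
satisfies `(div S₂)(Y) = −⟨τ₂(φ), dφ(Y)⟩`, where `τ₂(φ) = −Δτ(φ) − trace Rᴺ(dφ,τ(φ))dφ`.
Everything is expressed at an arbitrary point of `M` in a geodesic orthonormal frame:
`Ddphi = ∇dφ`, `D2tau = ∇²τ(φ)`, `RN` is the curvature of `N` (with its standard
symmetries), `DS2 Z X Y = (∇_Z S₂)(X,Y)` is given by the Leibniz rule, and the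
divergence of `S₂` is `Σᵢ (∇_{Xᵢ} S₂)(Xᵢ, Y)`; `−Δτ(φ) = trace ∇²τ(φ)`. -/
theorem stress_energy_divergence
    (m : ℕ) (F : Type*) [NormedAddCommGroup F] [InnerProductSpace ℝ F]
    (dphi : EuclideanSpace ℝ (Fin m) →ₗ[ℝ] F)
    (tau : F)
    (Dtau : EuclideanSpace ℝ (Fin m) →ₗ[ℝ] F)
    (Ddphi : EuclideanSpace ℝ (Fin m) →ₗ[ℝ] EuclideanSpace ℝ (Fin m) →ₗ[ℝ] F)
    (D2tau : EuclideanSpace ℝ (Fin m) →ₗ[ℝ] EuclideanSpace ℝ (Fin m) →ₗ[ℝ] F)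
    (RN : F →ₗ[ℝ] F →ₗ[ℝ] F →ₗ[ℝ] F)
    (hR1 : ∀ u v w : F, RN u v w = - RN v u w)
    (hR2 : ∀ u v w z : F, ⟪RN u v w, z⟫ = - ⟪RN u v z, w⟫)
    (hR3 : ∀ u v w z : F, ⟪RN u v w, z⟫ = ⟪RN w z u, v⟫)
    (htau : tau = ∑ i, Ddphi (onb m i) (onb m i))
    (hDdphisymm : ∀ X Y, Ddphi X Y = Ddphi Y X)
    (hRicci : ∀ X Y, D2tau X Y - D2tau Y X = RN (dphi X) (dphi Y) tau)
    (DS2 : EuclideanSpace ℝ (Fin m) → EuclideanSpace ℝ (Fin m) →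
      EuclideanSpace ℝ (Fin m) → ℝ)
    (hDS2 : ∀ Z X Y, DS2 Z X Y =
      ⟪Dtau Z, tau⟫ * ⟪X, Y⟫
        + (∑ i, (⟪Ddphi Z (onb m i), Dtau (onb m i)⟫
            + ⟪dphi (onb m i), D2tau Z (onb m i)⟫)) * ⟪X, Y⟫
        - ⟪Ddphi Z X, Dtau Y⟫ - ⟪dphi X, D2tau Z Y⟫
        - ⟪Ddphi Z Y, Dtau X⟫ - ⟪dphi Y, D2tau Z X⟫) :
    ∀ Y, (∑ i, DS2 (onb m i) (onb m i) Y) =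
      - ⟪(∑ i, D2tau (onb m i) (onb m i))
          - ∑ i, RN (dphi (onb m i)) tau (dphi (onb m i)), dphi Y⟫ := by
  intro Y
  have hY : ∀ (L : EuclideanSpace ℝ (Fin m) →ₗ[ℝ] F),
      L Y = ∑ i, ⟪onb m i, Y⟫ • L (onb m i) := by
    intro L
    conv_lhs => rw [← (onb m).sum_repr Y]
    rw [map_sum]
    exact Finset.sum_congr rfl fun i _ => by
      rw [map_smul, OrthonormalBasis.repr_apply_apply]
  have hY2 : ∀ (L : EuclideanSpace ℝ (Fin m) →ₗ[ℝ]
      (EuclideanSpace ℝ (Fin m) →ₗ[ℝ] F)) (w : EuclideanSpace ℝ (Fin m)),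
      L Y w = ∑ i, ⟪onb m i, Y⟫ • L (onb m i) w := by
    intro L w
    have h := hY (L.flip w)
    simpa [LinearMap.flip_apply] using h
  have hS1 : ∑ i, ⟪Dtau (onb m i), tau⟫ * ⟪onb m i, Y⟫ = ⟪Dtau Y, tau⟫ := by
    rw [hY Dtau, sum_inner]
    exact Finset.sum_congr rfl fun i _ => by
      rw [real_inner_smul_left]; ring
  have hS3 : ∑ i, ⟪Ddphi (onb m i) (onb m i), Dtau Y⟫ = ⟪Dtau Y, tau⟫ := by
    rw [htau, inner_sum]
    exact Finset.sum_congr rfl fun i _ => real_inner_comm _ _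
  have hS5 : ∑ i, ⟪Ddphi (onb m i) Y, Dtau (onb m i)⟫
      = ∑ i, ⟪Ddphi Y (onb m i), Dtau (onb m i)⟫ :=
    Finset.sum_congr rfl fun i _ => by rw [hDdphisymm]
  have hS2 : ∑ i, ((∑ j, ⟪Ddphi (onb m i) (onb m j), Dtau (onb m j)⟫)
        + ∑ j, ⟪dphi (onb m j), D2tau (onb m i) (onb m j)⟫) * ⟪onb m i, Y⟫
      = (∑ j, ⟪Ddphi Y (onb m j), Dtau (onb m j)⟫)
        + ∑ j, ⟪dphi (onb m j), D2tau Y (onb m j)⟫ := by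
    simp only [add_mul, Finset.sum_mul]
    rw [Finset.sum_add_distrib, Finset.sum_comm,
      Finset.sum_comm (f := fun i j => ⟪dphi (onb m j), D2tau (onb m i) (onb m j)⟫ * ⟪onb m i, Y⟫)]
    congr 1
    · exact Finset.sum_congr rfl fun j _ => by
        rw [hY2 Ddphi (onb m j), sum_inner]
        exact Finset.sum_congr rfl fun i _ => by
          rw [real_inner_smul_left]; ring
    · exact Finset.sum_congr rfl fun j _ => by
        rw [hY2 D2tau (onb m j), inner_sum]
        exact Finset.sum_congr rfl fun i _ => by
          rw [real_inner_smul_right]; ring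
  have hcurv : ∀ j, ⟪dphi (onb m j), D2tau Y (onb m j)⟫
      - ⟪dphi (onb m j), D2tau (onb m j) Y⟫
      = ⟪RN (dphi (onb m j)) tau (dphi (onb m j)), dphi Y⟫ := by
    intro j
    rw [← inner_sub_right, hRicci]
    rw [real_inner_comm, hR2, hR1 (dphi Y) (dphi (onb m j))]
    simp only [LinearMap.neg_apply, inner_neg_left, neg_neg]
    rw [hR3]
  have hBC : (∑ j, ⟪dphi (onb m j), D2tau Y (onb m j)⟫)
      - ∑ j, ⟪dphi (onb m j), D2tau (onb m j) Y⟫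
      = ∑ j, ⟪RN (dphi (onb m j)) tau (dphi (onb m j)), dphi Y⟫ := by
    rw [← Finset.sum_sub_distrib]
    exact Finset.sum_congr rfl fun j _ => hcurv j
  have hD : ∑ j, ⟪dphi Y, D2tau (onb m j) (onb m j)⟫
      = ∑ j, ⟪D2tau (onb m j) (onb m j), dphi Y⟫ :=
    Finset.sum_congr rfl fun j _ => real_inner_comm _ _
  simp only [hDS2]
  rw [inner_sub_left, sum_inner, sum_inner]
  simp only [Finset.sum_sub_distrib, Finset.sum_add_distrib]
  rw [hS1, hS2, hS3, hS5]
  linarith [hBC, hD]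

end
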